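/- arXiv:1410.8442 — 2 statements merged into one kernel-verified Lean document; each statement's English description precedes it below -/
import Mathlib

section
/- The Lodha–Moore group G is generated by its semi-deferred subgroup G(1) together with the element x_∅; moreover x_∅^{-1} G(1) x_∅ ⊆ G(11), so x_∅^{-1} G(1) x_∅ is a proper subgroup of G(1). Consequently G is a strictly ascending HNN extension of G(1) with stable element x_∅: G ≅ G(1)*_{φ,t} where φ(g) = x_∅^{-1} g x_∅. -/
namespace LodhaMoore

/-- Infinite binary sequences `2^ℕ`. -/
abbrev Seq : Type := ℕ → Bool

/-- The underlying function of the basic bijection `x`: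
`00η ↦ 0η`, `01η ↦ 10η`, `1η ↦ 11η` (reading `false` as `0` and `true` as `1`). -/
def xFun (ξ : Seq) : Seq := fun n =>
  if ξ 0 then
    match n with
    | 0 => true
    | 1 => true
    | n+2 => ξ (n+1)
  else if ξ 1 then
    match n with
    | 0 => true
    | 1 => false
    | n+2 => ξ (n+2)
  else
    match n with
    | 0 => false
    | n+1 => ξ (n+2)

/-- The inverse of `xFun`: `0η ↦ 00η`, `10η ↦ 01η`, `11η ↦ 1η`. -/
def xInv (ξ : Seq) : Seq := fun n =>
  if ξ 0 then
    if ξ 1 then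
      match n with
      | 0 => true
      | n+1 => ξ (n+2)
    else
      match n with
      | 0 => false
      | 1 => true
      | n+2 => ξ (n+2)
  else
    match n with
    | 0 => false
    | 1 => false
    | n+2 => ξ (n+1)

/-- `yAux true n ξ` is the `n`-th bit of `ξ.y`, and `yAux false n ξ` is the `n`-th bit of
`ξ.y⁻¹`, where `y` is defined by `00η ↦ 0(η.y)`, `01η ↦ 10(η.y⁻¹)`, `1η ↦ 11(η.y)`,
so `y⁻¹` is given by `0η ↦ 00(η.y⁻¹)`, `10η ↦ 01(η.y)`, `11η ↦ 1(η.y⁻¹)`. -/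
def yAux : Bool → ℕ → Seq → Bool
  | true, 0, ξ => if ξ 0 then true else if ξ 1 then true else false
  | true, 1, ξ => if ξ 0 then true else if ξ 1 then false
      else yAux true 0 (fun k => ξ (k+2))
  | true, n+2, ξ =>
      if ξ 0 then yAux true n (fun k => ξ (k+1))
      else if ξ 1 then yAux false n (fun k => ξ (k+2))
      else yAux true (n+1) (fun k => ξ (k+2))
  | false, 0, ξ => if ξ 0 then (if ξ 1 then true else false) else false
  | false, 1, ξ => if ξ 0 then (if ξ 1 then yAux false 0 (fun k => ξ (k+2)) else true)
      else false
  | false, n+2, ξ =>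
      if ξ 0 then
        (if ξ 1 then yAux false (n+1) (fun k => ξ (k+2))
         else yAux true n (fun k => ξ (k+2)))
      else yAux false n (fun k => ξ (k+1))

lemma yAux_inv (n : ℕ) :
    ∀ ξ : Seq, (yAux false n (fun k => yAux true k ξ) = ξ n) ∧
      (yAux true n (fun k => yAux false k ξ) = ξ n) := by
  induction n using Nat.strong_induction_on with
  | _ n IH =>
    intro ξ
    constructor
    · cases h0 : ξ 0 <;> cases h1 : ξ 1 <;> rcases n with _ | _ | n <;>
        simp [yAux, h0, h1]
      · have e : (fun k => yAux true (k+1) ξ) = fun k => yAux true k (fun j => ξ (j+2)) :=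
          funext fun k => by cases k <;> simp [yAux, h0, h1]
        rw [e]; exact (IH n (by omega) _).1
      · exact (IH n (by omega) _).2
      · intro h2 h3; simp_all
      · exact (IH (n+1) (by omega) _).1
      · exact (IH (n+1) (by omega) _).1
    · cases h0 : ξ 0 <;> cases h1 : ξ 1 <;> rcases n with _ | _ | n <;>
        simp [yAux, h0, h1]
      · exact (IH (n+1) (by omega) _).2
      · cases h2 : ξ 2 <;> simp [h2]
      · exact (IH (n+1) (by omega) _).2
      · exact (IH n (by omega) _).1
      · have e : (fun k => yAux false (k+1) ξ) = fun k => yAux false k (fun j => ξ (j+2)) :=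
          funext fun k => by cases k <;> simp [yAux, h0, h1]
        rw [e]; exact (IH n (by omega) _).2

/-- The basic bijection `x` of `2^ℕ`. -/
def xPerm : Equiv.Perm Seq where
  toFun := xFun
  invFun := xInv
  left_inv := by
    intro ξ
    funext n
    cases h0 : ξ 0 <;> cases h1 : ξ 1 <;>
      rcases n with _ | _ | n <;>
      simp [xFun, xInv, h0, h1]
  right_inv := by
    intro ξ
    funext n
    cases h0 : ξ 0 <;> cases h1 : ξ 1 <;>
      rcases n with _ | _ | n <;>
      simp [xFun, xInv, h0, h1]

/-- The basic bijection `y` of `2^ℕ`. -/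
def yPerm : Equiv.Perm Seq where
  toFun ξ := fun n => yAux true n ξ
  invFun ξ := fun n => yAux false n ξ
  left_inv ξ := funext fun n => (yAux_inv n ξ).1
  right_inv ξ := funext fun n => (yAux_inv n ξ).2

/-- Prepend a finite word to an infinite sequence. -/
def append (s : List Bool) (ξ : Seq) : Seq := fun n =>
  if h : n < s.length then s.get ⟨n, h⟩ else ξ (n - s.length)

/-- Drop the first `k` letters of an infinite sequence. -/
def dropN (k : ℕ) (ξ : Seq) : Seq := fun n => ξ (n + k)

/-- `hasPrefix s ξ` iff the finite word `s` is a prefix of `ξ`. -/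
def hasPrefix (s : List Bool) (ξ : Seq) : Prop := ∀ i : Fin s.length, ξ i = s.get i

instance (s : List Bool) (ξ : Seq) : Decidable (hasPrefix s ξ) := by
  unfold hasPrefix; infer_instance

lemma hasPrefix_append (s : List Bool) (ξ : Seq) : hasPrefix s (append s ξ) := by
  intro i
  simp [append, i.isLt]

lemma dropN_append (s : List Bool) (ξ : Seq) : dropN s.length (append s ξ) = ξ := by
  funext n
  simp [dropN, append, Nat.not_lt.2 (Nat.le_add_left _ _)]

lemma append_dropN {s : List Bool} {ξ : Seq} (h : hasPrefix s ξ) :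
    append s (dropN s.length ξ) = ξ := by
  funext n
  by_cases h' : n < s.length
  · simpa [append, h'] using (h ⟨n, h'⟩).symm
  · simp [append, h', dropN, Nat.sub_add_cancel (Nat.le_of_not_lt h')]

/-- The bijection of `2^ℕ` acting as the bijection `f` "at the address `s`":
`sη ↦ s(η.f)`, and `ξ ↦ ξ` if `s` is not a prefix of `ξ`. -/
def localize (s : List Bool) (f : Equiv.Perm Seq) : Equiv.Perm Seq where
  toFun ξ := if hasPrefix s ξ then append s (f (dropN s.length ξ)) else ξ
  invFun ξ := if hasPrefix s ξ then append s (f.symm (dropN s.length ξ)) else ξ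
  left_inv := by
    intro ξ
    by_cases h : hasPrefix s ξ
    · simp [h, hasPrefix_append, dropN_append, append_dropN h]
    · simp [h]
  right_inv := by
    intro ξ
    by_cases h : hasPrefix s ξ
    · simp [h, hasPrefix_append, dropN_append, append_dropN h]
    · simp [h]

/-- The group of bijections of `2^ℕ`.  Composition is written so that in a product `g * h`
the factor `g` acts first: bijections act on the right, as in Lodha--Moore's paper. -/
abbrev M : Type := (Equiv.Perm Seq)ᵐᵒᵖ

/-- The generator `x_s`, `s ∈ 2^{<ℕ}` (a finite binary sequence, i.e. a `List Bool`). -/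
def px (s : List Bool) : M := MulOpposite.op (localize s xPerm)

/-- The generator `y_s`, `s ∈ 2^{<ℕ}`. -/
def py (s : List Bool) : M := MulOpposite.op (localize s yPerm)

/-- `t` is a word of the form `0^n`, `n ≥ 0`. -/
def allFalse (t : List Bool) : Prop := ∀ b ∈ t, b = false

/-- `t` is a word of the form `1^n`, `n ≥ 0`. -/
def allTrue (t : List Bool) : Prop := ∀ b ∈ t, b = true

instance (t : List Bool) : Decidable (allFalse t) := by unfold allFalse; infer_instance
instance (t : List Bool) : Decidable (allTrue t) := by unfold allTrue; infer_instance

/-- Addresses allowed for the `y`-generators of the Lodha–Moore group `G`. -/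
def gSet : Set (List Bool) := {t | ¬ allFalse t ∧ ¬ allTrue t}
/-- Addresses allowed for the `y`-generators of the Lodha–Moore group `G_y`. -/
def gySet : Set (List Bool) := {t | ¬ allFalse t}
/-- Addresses allowed for the `y`-generators of the Lodha–Moore group `yG`. -/
def ygSet : Set (List Bool) := {t | ¬ allTrue t}
/-- Addresses allowed for the `y`-generators of the Lodha–Moore group `yGy`. -/
def ygySet : Set (List Bool) := Set.univ

/-- The Lodha–Moore style group with `y`-generators allowed at the addresses in `A`. -/
def LM (A : Set (List Bool)) : Subgroup M :=
  Subgroup.closure (Set.range px ∪ py '' A)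

/-- The Lodha–Moore group `G`. -/
def G : Subgroup M := LM gSet
/-- The Lodha–Moore group `G_y`. -/
def Gy : Subgroup M := LM gySet
/-- The Lodha–Moore group `yG`. -/
def yG : Subgroup M := LM ygSet
/-- The Lodha–Moore group `yGy`. -/
def yGy : Subgroup M := LM ygySet

/-- The semi-deferred subgroup `H(s)` of the Lodha–Moore group `H = LM A`: the subgroup
generated by those generators of `H` whose address has `s` as a prefix. -/
def LMdef (A : Set (List Bool)) (s : List Bool) : Subgroup M :=
  Subgroup.closure ((px '' {t | s <+: t}) ∪ (py '' {t | t ∈ A ∧ s <+: t}))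

lemma px_mem (A : Set (List Bool)) (s : List Bool) : px s ∈ LM A :=
  Subgroup.subset_closure (Or.inl ⟨s, rfl⟩)

lemma py_mem {A : Set (List Bool)} {s : List Bool} (h : s ∈ A) : py s ∈ LM A :=
  Subgroup.subset_closure (Or.inr ⟨s, h, rfl⟩)

lemma px_mem_def (A : Set (List Bool)) {s t : List Bool} (h : s <+: t) :
    px t ∈ LMdef A s :=
  Subgroup.subset_closure (Or.inl ⟨t, h, rfl⟩)

lemma py_mem_def {A : Set (List Bool)} {s t : List Bool} (h1 : t ∈ A) (h2 : s <+: t) :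
    py t ∈ LMdef A s :=
  Subgroup.subset_closure (Or.inr ⟨t, ⟨h1, h2⟩, rfl⟩)

/-- The conjugate subgroup `z B z⁻¹`. -/
def conjSubgroup {H : Type*} [Group H] (z : H) (B : Subgroup H) : Subgroup H :=
  B.map (MulAut.conj z).toMonoidHom

/-- The `MulEquiv` `φ.range ≃* ⊤` used to define an ascending HNN extension. -/
noncomputable def ascEquiv {B : Type*} [Group B] (φ : B →* B) (hφ : Function.Injective φ) :
    (φ.range : Subgroup B) ≃* (⊤ : Subgroup B) :=
  (MonoidHom.ofInjective hφ).symm.trans Subgroup.topEquiv.symm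

/-- The ascending HNN extension `B*_{φ,t} = ⟨B, t ∣ t⁻¹ b t = φ(b) for all b ∈ B⟩` of the
group `B` along the injective endomorphism `φ`.  (In `HNNExtension B φ.range ⊤ (ascEquiv φ hφ)`
the defining relation is exactly `t⁻¹ * of b * t = of (φ b)` for all `b : B`.) -/
noncomputable abbrev AscHNN {B : Type*} [Group B] (φ : B →* B)
    (hφ : Function.Injective φ) : Type _ :=
  HNNExtension B φ.range ⊤ (ascEquiv φ hφ)


/-- Prepend one letter to an infinite sequence. -/
def cons (b : Bool) (ξ : Seq) : Seq := fun n => match n with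
  | 0 => b
  | n+1 => ξ n

@[simp] lemma cons_zero (b : Bool) (ξ : Seq) : cons b ξ 0 = b := rfl
@[simp] lemma cons_succ (b : Bool) (ξ : Seq) (n : ℕ) : cons b ξ (n+1) = ξ n := rfl

lemma seq_eq_cons (ξ : Seq) : ξ = cons (ξ 0) (dropN 1 ξ) := by
  funext n; cases n <;> simp [cons, dropN]

lemma xFun_t (ξ : Seq) : xFun (cons true ξ) = cons true (cons true ξ) := by
  funext n; rcases n with _ | _ | n <;> simp [xFun, cons]

lemma xFun_ff (ξ : Seq) : xFun (cons false (cons false ξ)) = cons false ξ := by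
  funext n; rcases n with _ | _ | n <;> simp [xFun, cons]

lemma xFun_ft (ξ : Seq) : xFun (cons false (cons true ξ)) = cons true (cons false ξ) := by
  funext n; rcases n with _ | _ | n <;> simp [xFun, cons]

lemma xInv_f (ξ : Seq) : xInv (cons false ξ) = cons false (cons false ξ) := by
  funext n; rcases n with _ | _ | n <;> simp [xInv, cons]

lemma xInv_tf (ξ : Seq) : xInv (cons true (cons false ξ)) = cons false (cons true ξ) := by
  funext n; rcases n with _ | _ | n <;> simp [xInv, cons]

lemma xInv_tt (ξ : Seq) : xInv (cons true (cons true ξ)) = cons true ξ := by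
  funext n; rcases n with _ | _ | n <;> simp [xInv, cons]

lemma append_cons (b : Bool) (s : List Bool) (ξ : Seq) :
    append (b :: s) ξ = cons b (append s ξ) := by
  funext n
  rcases n with _ | n
  · simp [append, cons]
  · by_cases h : n < s.length <;> simp [append, cons, h, Nat.succ_lt_succ_iff]

lemma hasPrefix_nil (ξ : Seq) : hasPrefix [] ξ := by
  intro i; exact absurd i.isLt (by simp)

lemma hasPrefix_cons_iff (b : Bool) (s : List Bool) (c : Bool) (ξ : Seq) :
    hasPrefix (b :: s) (cons c ξ) ↔ c = b ∧ hasPrefix s ξ := by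
  constructor
  · intro h
    refine ⟨h ⟨0, by simp⟩, fun i => ?_⟩
    have := h ⟨i.1 + 1, by simpa using Nat.succ_lt_succ i.isLt⟩
    simpa using this
  · rintro ⟨rfl, h⟩ ⟨i, hi⟩
    rcases i with _ | i
    · simp
    · simpa using h ⟨i, by simpa using Nat.lt_of_succ_lt_succ hi⟩

lemma dropN_cons (l : ℕ) (c : Bool) (ξ : Seq) :
    dropN (l + 1) (cons c ξ) = dropN l ξ := by
  funext n; simp [dropN, cons, Nat.add_assoc]

lemma localize_apply_cons (b : Bool) (s : List Bool) (f : Equiv.Perm Seq) (ξ : Seq) :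
    localize (b :: s) f (cons b ξ) = cons b (localize s f ξ) := by
  show (if hasPrefix (b::s) (cons b ξ) then _ else _) = _
  by_cases h : hasPrefix s ξ
  · rw [if_pos ((hasPrefix_cons_iff b s b ξ).2 ⟨rfl, h⟩)]
    show append (b::s) (f (dropN (s.length+1) (cons b ξ))) = _
    rw [dropN_cons, append_cons]
    show _ = cons b (if hasPrefix s ξ then append s (f (dropN s.length ξ)) else ξ)
    rw [if_pos h]
  · rw [if_neg (fun hh => h ((hasPrefix_cons_iff b s b ξ).1 hh).2)]
    show _ = cons b (if hasPrefix s ξ then append s (f (dropN s.length ξ)) else ξ)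
    rw [if_neg h]

lemma localize_apply_cons_ne (b : Bool) (s : List Bool) (f : Equiv.Perm Seq) (c : Bool)
    (hbc : c ≠ b) (ξ : Seq) : localize (b :: s) f (cons c ξ) = cons c ξ := by
  show (if hasPrefix (b::s) (cons c ξ) then _ else _) = _
  rw [if_neg (fun hh => hbc ((hasPrefix_cons_iff b s c ξ).1 hh).1)]

lemma localize_nil (f : Equiv.Perm Seq) : localize [] f = f := by
  refine Equiv.ext fun ξ => ?_
  show (if hasPrefix [] ξ then append [] (f (dropN 0 ξ)) else ξ) = f ξ
  rw [if_pos (hasPrefix_nil ξ)]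
  have h1 : dropN 0 ξ = ξ := by funext n; simp [dropN]
  have h2 : ∀ η : Seq, append [] η = η := by intro η; funext n; simp [append]
  rw [h1, h2]
lemma xPerm_apply (ξ : Seq) : xPerm ξ = xFun ξ := rfl
lemma xPerm_inv_apply (ξ : Seq) : xPerm⁻¹ ξ = xInv ξ := rfl

lemma localize_apply_cons' (b : Bool) (f : Equiv.Perm Seq) (ξ : Seq) :
    localize [b] f (cons b ξ) = cons b (f ξ) := by
  rw [localize_apply_cons, localize_nil]

lemma conj_phi (s : List Bool) (f : Equiv.Perm Seq) (ξ : Seq) :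
    xFun (localize (true::s) f (xInv ξ)) = localize (true::true::s) f ξ := by
  have key : ∀ (b1 b2 : Bool) (ρ : Seq),
      xFun (localize (true::s) f (xInv (cons b1 (cons b2 ρ)))) =
        localize (true::true::s) f (cons b1 (cons b2 ρ)) := by
    intro b1 b2 ρ
    cases b1
    · rw [xInv_f, localize_apply_cons_ne _ _ _ _ (by simp), xFun_ff,
        localize_apply_cons_ne _ _ _ _ (by simp)]
    · cases b2
      · rw [xInv_tf, localize_apply_cons_ne _ _ _ _ (by simp), xFun_ft,
          localize_apply_cons, localize_apply_cons_ne _ _ _ _ (by simp)]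
      · rw [xInv_tt, localize_apply_cons, xFun_t, localize_apply_cons, localize_apply_cons]
  rw [seq_eq_cons ξ, seq_eq_cons (dropN 1 ξ)]
  exact key _ _ _

lemma conj_psi_ff (s : List Bool) (f : Equiv.Perm Seq) (ξ : Seq) :
    xInv (localize (false::s) f (xFun ξ)) = localize (false::false::s) f ξ := by
  have key : ∀ (b1 b2 : Bool) (ρ : Seq),
      xInv (localize (false::s) f (xFun (cons b1 (cons b2 ρ)))) =
        localize (false::false::s) f (cons b1 (cons b2 ρ)) := by
    intro b1 b2 ρ
    cases b1
    · cases b2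
      · rw [xFun_ff, localize_apply_cons, xInv_f, localize_apply_cons, localize_apply_cons]
      · rw [xFun_ft, localize_apply_cons_ne _ _ _ _ (by simp), xInv_tf,
          localize_apply_cons, localize_apply_cons_ne _ _ _ _ (by simp)]
    · rw [xFun_t, localize_apply_cons_ne _ _ _ _ (by simp), xInv_tt,
        localize_apply_cons_ne _ _ _ _ (by simp)]
  rw [seq_eq_cons ξ, seq_eq_cons (dropN 1 ξ)]
  exact key _ _ _

lemma conj_psi_tf (s : List Bool) (f : Equiv.Perm Seq) (ξ : Seq) :
    xInv (localize (true::false::s) f (xFun ξ)) = localize (false::true::s) f ξ := by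
  have key : ∀ (b1 b2 : Bool) (ρ : Seq),
      xInv (localize (true::false::s) f (xFun (cons b1 (cons b2 ρ)))) =
        localize (false::true::s) f (cons b1 (cons b2 ρ)) := by
    intro b1 b2 ρ
    cases b1
    · cases b2
      · rw [xFun_ff, localize_apply_cons_ne _ _ _ _ (by simp), xInv_f,
          localize_apply_cons, localize_apply_cons_ne _ _ _ _ (by simp)]
      · rw [xFun_ft, localize_apply_cons, localize_apply_cons, xInv_tf,
          localize_apply_cons, localize_apply_cons]
    · rw [xFun_t, localize_apply_cons, localize_apply_cons_ne _ _ _ _ (by simp),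
        xInv_tt, localize_apply_cons_ne _ _ _ _ (by simp)]
  rw [seq_eq_cons ξ, seq_eq_cons (dropN 1 ξ)]
  exact key _ _ _

lemma xx_relation (ξ : Seq) :
    xFun (xFun ξ) = localize [true] xPerm (xFun (localize [false] xPerm ξ)) := by
  have key : ∀ (b1 b2 b3 : Bool) (ρ : Seq),
      xFun (xFun (cons b1 (cons b2 (cons b3 ρ)))) =
        localize [true] xPerm (xFun (localize [false] xPerm (cons b1 (cons b2 (cons b3 ρ))))) := by
    intro b1 b2 b3 ρ
    cases b1
    · cases b2
      · cases b3
        · rw [xFun_ff, xFun_ff, localize_apply_cons', xPerm_apply, xFun_ff, xFun_ff,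
            localize_apply_cons_ne _ _ _ _ (by simp)]
        · rw [xFun_ff, xFun_ft, localize_apply_cons', xPerm_apply, xFun_ft, xFun_ft,
            localize_apply_cons', xPerm_apply, xFun_ff]
      · rw [xFun_ft, xFun_t, localize_apply_cons', xPerm_apply, xFun_t, xFun_ft,
          localize_apply_cons', xPerm_apply, xFun_ft]
    · rw [xFun_t, xFun_t, localize_apply_cons_ne _ _ _ _ (by simp), xFun_t,
        localize_apply_cons', xPerm_apply, xFun_t]
  rw [seq_eq_cons ξ, seq_eq_cons (dropN 1 ξ), seq_eq_cons (dropN 1 (dropN 1 ξ))]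
  exact key _ _ _ _

lemma px_nil : px [] = MulOpposite.op xPerm := by
  rw [px, localize_nil]

lemma op_conj_phi (s : List Bool) (f : Equiv.Perm Seq) :
    (px [])⁻¹ * MulOpposite.op (localize (true::s) f) * px [] =
      MulOpposite.op (localize (true::true::s) f) := by
  rw [px_nil, ← MulOpposite.op_inv, ← MulOpposite.op_mul, ← MulOpposite.op_mul]
  congr 1
  refine Equiv.ext fun ξ => ?_
  show xPerm ((localize (true::s) f) (xPerm⁻¹ ξ)) = _
  rw [xPerm_apply, xPerm_inv_apply]
  exact conj_phi s f ξ

lemma op_conj_psi_ff (s : List Bool) (f : Equiv.Perm Seq) :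
    px [] * MulOpposite.op (localize (false::s) f) * (px [])⁻¹ =
      MulOpposite.op (localize (false::false::s) f) := by
  rw [px_nil, ← MulOpposite.op_inv, ← MulOpposite.op_mul, ← MulOpposite.op_mul]
  congr 1
  refine Equiv.ext fun ξ => ?_
  show xPerm⁻¹ ((localize (false::s) f) (xPerm ξ)) = _
  rw [xPerm_apply, xPerm_inv_apply]
  exact conj_psi_ff s f ξ

lemma op_conj_psi_tf (s : List Bool) (f : Equiv.Perm Seq) :
    px [] * MulOpposite.op (localize (true::false::s) f) * (px [])⁻¹ =
      MulOpposite.op (localize (false::true::s) f) := by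
  rw [px_nil, ← MulOpposite.op_inv, ← MulOpposite.op_mul, ← MulOpposite.op_mul]
  congr 1
  refine Equiv.ext fun ξ => ?_
  show xPerm⁻¹ ((localize (true::false::s) f) (xPerm ξ)) = _
  rw [xPerm_apply, xPerm_inv_apply]
  exact conj_psi_tf s f ξ

lemma op_xx_relation : px [] * px [] = px [false] * px [] * px [true] := by
  rw [px_nil, px, px, ← MulOpposite.op_mul, ← MulOpposite.op_mul, ← MulOpposite.op_mul]
  congr 1
  refine Equiv.ext fun ξ => ?_
  show xPerm (xPerm ξ) = localize [true] xPerm (xPerm ((localize [false] xPerm) ξ))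
  rw [xPerm_apply, xPerm_apply, xPerm_apply]
  exact xx_relation ξ
/-- The subgroup of bijections fixing every sequence that does not have `s` as prefix. -/
def FixOutside (s : List Bool) : Subgroup M where
  carrier := {g | ∀ ξ : Seq, ¬ hasPrefix s ξ → (MulOpposite.unop g) ξ = ξ}
  one_mem' := fun ξ _ => rfl
  mul_mem' := by
    intro a b ha hb ξ hξ
    show (MulOpposite.unop b * MulOpposite.unop a) ξ = ξ
    rw [Equiv.Perm.mul_apply, ha ξ hξ, hb ξ hξ]
  inv_mem' := by
    intro a ha ξ hξ
    show (MulOpposite.unop a)⁻¹ ξ = ξ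
    conv_lhs => rw [← ha ξ hξ]
    simp

lemma hasPrefix_of_prefix {s t : List Bool} (h : s <+: t) {ξ : Seq}
    (ht : hasPrefix t ξ) : hasPrefix s ξ := by
  intro i
  obtain ⟨u, rfl⟩ := h
  have hi : (i : ℕ) < (s ++ u).length := by
    simp only [List.length_append]
    exact lt_of_lt_of_le i.isLt (Nat.le_add_right _ _)
  have := ht ⟨i, hi⟩
  simpa [List.getElem_append_left i.isLt] using this

lemma localize_mem_fixOutside {s t : List Bool} (h : s <+: t) (f : Equiv.Perm Seq) :
    MulOpposite.op (localize t f) ∈ FixOutside s := by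
  intro ξ hξ
  show (if hasPrefix t ξ then _ else ξ) = ξ
  rw [if_neg (fun ht => hξ (hasPrefix_of_prefix h ht))]

lemma LMdef_le_fixOutside (A : Set (List Bool)) (s : List Bool) :
    LMdef A s ≤ FixOutside s := by
  rw [LMdef, Subgroup.closure_le]
  rintro g (⟨t, ht, rfl⟩ | ⟨t, ht, rfl⟩)
  · exact localize_mem_fixOutside ht xPerm
  · exact localize_mem_fixOutside ht.2 yPerm

/-- The sequence `0,1,0,0,0,…` -/
def xi0 : Seq := fun n => decide (n = 1)

lemma not_hasPrefix_true_xi0 : ¬ hasPrefix [true] xi0 := by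
  intro h
  have := h ⟨0, by simp⟩
  simp [xi0] at this

lemma xPerm_pow_xi0 (k : ℕ) : (xPerm ^ (k+1)) xi0 = fun n => decide (n < k+1) := by
  induction k with
  | zero =>
    rw [pow_one]
    funext n
    rcases n with _ | _ | n <;> simp [xPerm_apply, xFun, xi0]
  | succ k ih =>
    rw [pow_succ', Equiv.Perm.mul_apply, ih]
    funext n
    rcases n with _ | _ | n <;> simp [xPerm_apply, xFun] <;> omega
lemma xPermInv_pow_xi0 (k : ℕ) : (xPerm⁻¹ ^ (k+1)) xi0 = fun n => decide (n = k+2) := by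
  induction k with
  | zero =>
    rw [pow_one]
    funext n
    rcases n with _ | _ | n <;> simp [xPerm_inv_apply, xInv, xi0]
  | succ k ih =>
    rw [pow_succ', Equiv.Perm.mul_apply, ih]
    funext n
    rcases n with _ | _ | n <;> simp [xPerm_inv_apply, xInv] <;> omega

lemma px_pow_not_mem_fixOutside (k : ℕ) : (px []) ^ (k+1) ∉ FixOutside [true] := by
  intro h
  have h0 := h xi0 not_hasPrefix_true_xi0
  rw [px_nil, ← MulOpposite.op_pow, MulOpposite.unop_op, xPerm_pow_xi0] at h0
  have := congrFun h0 0
  simp [xi0] at this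

lemma px_inv_pow_not_mem_fixOutside (k : ℕ) : ((px [])⁻¹) ^ (k+1) ∉ FixOutside [true] := by
  intro h
  have h0 := h xi0 not_hasPrefix_true_xi0
  rw [px_nil, ← MulOpposite.op_inv, ← MulOpposite.op_pow, MulOpposite.unop_op,
    xPermInv_pow_xi0] at h0
  have := congrFun h0 1
  simp [xi0] at this
/-- The subgroup generated by `G(1)` and `x_∅`. -/
def Hc : Subgroup M := Subgroup.closure ((LMdef gSet [true] : Set M) ∪ {px []})

lemma hX_mem : px [] ∈ Hc := Subgroup.subset_closure (Or.inr rfl)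

lemma hG1_le : LMdef gSet [true] ≤ Hc :=
  fun _ hg => Subgroup.subset_closure (Or.inl hg)

lemma psi_mem {g : M} (hg : g ∈ Hc) : px [] * g * (px [])⁻¹ ∈ Hc :=
  mul_mem (mul_mem hX_mem hg) (inv_mem hX_mem)

lemma px_eq_op (s : List Bool) : px s = MulOpposite.op (localize s xPerm) := rfl
lemma py_eq_op (s : List Bool) : py s = MulOpposite.op (localize s yPerm) := rfl

lemma px_false_mem_Hc : ∀ (n : ℕ) (s : List Bool), s.length ≤ n → px (false :: s) ∈ Hc := by
  intro n
  induction n with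
  | zero =>
    intro s hs
    rw [List.length_eq_zero_iff.1 (Nat.le_zero.1 hs)]
    have hrel : px [false] = px [] * px [] * (px [true])⁻¹ * (px [])⁻¹ := by
      rw [op_xx_relation]; group
    rw [hrel]
    exact mul_mem (mul_mem (mul_mem hX_mem hX_mem)
      (inv_mem (hG1_le (px_mem_def gSet (List.prefix_refl _))))) (inv_mem hX_mem)
  | succ n ih =>
    intro s hs
    rcases s with _ | ⟨_ | _, s'⟩
    · exact ih [] (by simp)
    · -- s = false :: s'
      have : px (false :: false :: s') = px [] * px (false :: s') * (px [])⁻¹ :=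
        (op_conj_psi_ff s' xPerm).symm
      rw [this]
      exact psi_mem (ih s' (by simpa using Nat.le_of_succ_le_succ hs))
    · -- s = true :: s'
      have : px (false :: true :: s') = px [] * px (true :: false :: s') * (px [])⁻¹ :=
        (op_conj_psi_tf s' xPerm).symm
      rw [this]
      exact psi_mem (hG1_le (px_mem_def gSet ⟨false :: s', rfl⟩))

lemma px_mem_Hc (s : List Bool) : px s ∈ Hc := by
  rcases s with _ | ⟨_ | _, s'⟩
  · exact hX_mem
  · exact px_false_mem_Hc _ s' le_rfl
  · exact hG1_le (px_mem_def gSet ⟨s', rfl⟩)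

lemma allFalse_nil : allFalse [] := fun b h => absurd h List.not_mem_nil

lemma allFalse_cons_false {t : List Bool} : allFalse (false :: t) ↔ allFalse t := by
  simp [allFalse]

lemma py_false_mem_Hc : ∀ (n : ℕ) (t : List Bool), t.length ≤ n → ¬ allFalse t →
    py (false :: t) ∈ Hc := by
  intro n
  induction n with
  | zero =>
    intro t ht hf
    rw [List.length_eq_zero_iff.1 (Nat.le_zero.1 ht)] at hf
    exact absurd allFalse_nil hf
  | succ n ih =>
    intro t ht hf
    rcases t with _ | ⟨_ | _, t'⟩
    · exact absurd allFalse_nil hf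
    · -- t = false :: t'
      have hf' : ¬ allFalse t' := fun h => hf (allFalse_cons_false.2 h)
      have : py (false :: false :: t') = px [] * py (false :: t') * (px [])⁻¹ :=
        (op_conj_psi_ff t' yPerm).symm
      rw [this]
      exact psi_mem (ih t' (by simpa using Nat.le_of_succ_le_succ ht) hf')
    · -- t = true :: t'
      have hmem : (true :: false :: t') ∈ gSet := by
        constructor
        · intro h; have := h true (by simp); simp at this
        · intro h; have := h false (by simp); simp at this
      have : py (false :: true :: t') = px [] * py (true :: false :: t') * (px [])⁻¹ :=
        (op_conj_psi_tf t' yPerm).symm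
      rw [this]
      exact psi_mem (hG1_le (py_mem_def hmem ⟨false :: t', rfl⟩))

lemma py_mem_Hc {t : List Bool} (ht : t ∈ gSet) : py t ∈ Hc := by
  rcases t with _ | ⟨_ | _, t'⟩
  · exact absurd allFalse_nil ht.1
  · have hf' : ¬ allFalse t' := fun h => ht.1 (allFalse_cons_false.2 h)
    exact py_false_mem_Hc _ t' le_rfl hf'
  · exact hG1_le (py_mem_def ht ⟨t', rfl⟩)

lemma LMdef_le_LM (A : Set (List Bool)) (s : List Bool) : LMdef A s ≤ LM A := by
  rw [LMdef, Subgroup.closure_le]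
  rintro g (⟨t, _, rfl⟩ | ⟨t, ht, rfl⟩)
  · exact px_mem A t
  · exact py_mem ht.1

lemma claim1 : Subgroup.closure ((LMdef gSet [true] : Set M) ∪ {px []}) = G := by
  apply le_antisymm
  · rw [Subgroup.closure_le]
    rintro g (hg | rfl)
    · exact LMdef_le_LM gSet [true] hg
    · exact px_mem gSet []
  · rw [G, LM, Subgroup.closure_le]
    rintro g (⟨s, rfl⟩ | ⟨t, ht, rfl⟩)
    · exact px_mem_Hc s
    · exact py_mem_Hc ht
lemma LMdef_anti (A : Set (List Bool)) {s s' : List Bool} (h : s <+: s') :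
    LMdef A s' ≤ LMdef A s := by
  rw [LMdef, Subgroup.closure_le]
  rintro g (⟨t, ht, rfl⟩ | ⟨t, ht, rfl⟩)
  · exact px_mem_def A (h.trans ht)
  · exact py_mem_def ht.1 (h.trans ht.2)

lemma gSet_TT {u : List Bool} (h : (true :: u) ∈ gSet) : (true :: true :: u) ∈ gSet := by
  constructor
  · intro hf; have := hf true (by simp); simp at this
  · intro ht
    exact h.2 (fun b hb => ht b (List.mem_cons_of_mem _ hb))

lemma conj_inv_apply (g : M) :
    (MulAut.conj (px [])⁻¹).toMonoidHom g = (px [])⁻¹ * g * px [] := by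
  simp [MulAut.conj_apply]

lemma claim2 : conjSubgroup (px [])⁻¹ (LMdef gSet [true]) ≤ LMdef gSet [true, true] := by
  rw [conjSubgroup, LMdef, MonoidHom.map_closure, Subgroup.closure_le]
  rintro g ⟨h, hh, rfl⟩
  rcases hh with ⟨t, ⟨u, rfl⟩, rfl⟩ | ⟨t, ⟨ht, u, rfl⟩, rfl⟩
  · rw [conj_inv_apply]
    have he : ([true] ++ u : List Bool) = true :: u := rfl
    rw [he, px_eq_op (true :: u), op_conj_phi]
    exact px_mem_def gSet ⟨u, rfl⟩
  · rw [conj_inv_apply]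
    have he : ([true] ++ u : List Bool) = true :: u := rfl
    rw [he, py_eq_op (true :: u), op_conj_phi]
    rw [he] at ht
    exact py_mem_def (gSet_TT ht) ⟨u, rfl⟩

lemma localize_append (s : List Bool) (f : Equiv.Perm Seq) (ξ : Seq) :
    localize s f (append s ξ) = append s (f ξ) := by
  show (if hasPrefix s (append s ξ) then _ else _) = _
  rw [if_pos (hasPrefix_append s ξ), dropN_append]

/-- The sequence `0,1,0,1,0,0,0,…` -/
def xi1 : Seq := append [false, true] xi0

lemma not_hasPrefix_true_xi1 : ¬ hasPrefix [true] xi1 := by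
  intro h
  have := h ⟨0, by simp⟩
  simp [xi1, append] at this

lemma px_FT_not_mem_fixOutside : px [false, true] ∉ FixOutside [true] := by
  intro h
  have h0 := h xi1 not_hasPrefix_true_xi1
  rw [px_eq_op, MulOpposite.unop_op] at h0
  rw [show xi1 = append [false, true] xi0 from rfl, localize_append] at h0
  have h2 := congrFun h0 2
  have hL : append [false, true] (xPerm xi0) 2 = xPerm xi0 0 := by simp [append]
  have hR : append [false, true] xi0 2 = xi0 0 := by simp [append]
  rw [hL, hR] at h2
  rw [xPerm_apply] at h2
  simp [xFun, xi0] at h2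

lemma claim3 : conjSubgroup (px [])⁻¹ (LMdef gSet [true]) < LMdef gSet [true] := by
  refine lt_of_le_of_ne (claim2.trans (LMdef_anti gSet ⟨[true], rfl⟩)) ?_
  intro heq
  have hmem : px [true, false] ∈ conjSubgroup (px [])⁻¹ (LMdef gSet [true]) := by
    rw [heq]; exact px_mem_def gSet ⟨[false], rfl⟩
  rw [conjSubgroup, Subgroup.mem_map] at hmem
  obtain ⟨g, hg, hgeq⟩ := hmem
  rw [conj_inv_apply] at hgeq
  have hgval : g = px [] * px [true, false] * (px [])⁻¹ := by
    rw [← hgeq]; group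
  rw [px_eq_op [true, false], op_conj_psi_tf] at hgval
  rw [show MulOpposite.op (localize [false, true] xPerm) = px [false, true] from rfl] at hgval
  rw [hgval] at hg
  exact px_FT_not_mem_fixOutside (LMdef_le_fixOutside gSet [true] hg)
lemma claim4 : ∀ (φ : ↥(LMdef gSet [true]) →* ↥(LMdef gSet [true]))
    (_ : ∀ b : ↥(LMdef gSet [true]), (φ b : M) = (px [])⁻¹ * (b : M) * px [])
    (hinj : Function.Injective φ),
    ∃ Φ : AscHNN φ hinj ≃* ↥G,
      (∀ b : ↥(LMdef gSet [true]), (Φ (HNNExtension.of b) : M) = (b : M)) ∧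
      (Φ HNNExtension.t : M) = px [] := by
  intro φ hconj hinj
  have hG1G : LMdef gSet [true] ≤ G := LMdef_le_LM gSet [true]
  set incl : ↥(LMdef gSet [true]) →* ↥G := Subgroup.inclusion hG1G with hincl
  set XG : ↥G := ⟨px [], px_mem gSet []⟩ with hXG
  have hAsc : ∀ (a : (φ.range : Subgroup ↥(LMdef gSet [true]))) (b : ↥(LMdef gSet [true])),
      φ b = ↑a → ((ascEquiv φ hinj a : (⊤ : Subgroup ↥(LMdef gSet [true]))) :
        ↥(LMdef gSet [true])) = b := by
    intro a b hb
    have h1 : MonoidHom.ofInjective hinj b = a := by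
      apply Subtype.ext
      rw [MonoidHom.ofInjective_apply]
      exact hb
    show ((((MonoidHom.ofInjective hinj).symm.trans Subgroup.topEquiv.symm) a :
      (⊤ : Subgroup ↥(LMdef gSet [true]))) : ↥(LMdef gSet [true])) = b
    rw [MulEquiv.trans_apply, ← h1, MulEquiv.symm_apply_apply]
    rfl
  have hx : ∀ a : (φ.range : Subgroup ↥(LMdef gSet [true])),
      XG * incl ↑a = incl ↑(ascEquiv φ hinj a) * XG := by
    intro a
    obtain ⟨b, hb⟩ := a.2
    rw [hAsc a b hb]
    apply Subtype.ext
    simp only [hincl, Subgroup.coe_mul, Subgroup.coe_inclusion]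
    rw [← hb, hconj b]
    rw [show ((XG : ↥G) : M) = px [] from rfl]
    group
  set ψ : AscHNN φ hinj →* ↥G := HNNExtension.lift incl XG hx with hψ
  have ψof : ∀ b, ψ (HNNExtension.of b) = incl b := fun b => HNNExtension.lift_of incl XG hx b
  have ψt : ψ HNNExtension.t = XG := HNNExtension.lift_t incl XG hx
  -- the commutation relation
  have K : ∀ b : ↥(LMdef gSet [true]),
      (HNNExtension.of b : AscHNN φ hinj) * HNNExtension.t
        = HNNExtension.t * HNNExtension.of (φ b) := by
    intro b
    have ha : φ b ∈ φ.range := ⟨b, rfl⟩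
    have h2 := @HNNExtension.t_mul_of (↥(LMdef gSet [true])) _ φ.range ⊤
      (ascEquiv φ hinj) ⟨φ b, ha⟩
    rw [hAsc ⟨φ b, ha⟩ b rfl] at h2
    exact h2.symm
  have Kpow : ∀ (j : ℕ) (b : ↥(LMdef gSet [true])),
      (HNNExtension.of b : AscHNN φ hinj) * HNNExtension.t ^ j
        = HNNExtension.t ^ j * HNNExtension.of ((⇑φ)^[j] b) := by
    intro j
    induction j with
    | zero => intro b; simp
    | succ j ih =>
      intro b
      rw [pow_succ', ← mul_assoc, K b, mul_assoc, ih (φ b), ← mul_assoc, ← pow_succ',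
        Function.iterate_succ_apply]
  have K' : ∀ (j : ℕ) (b : ↥(LMdef gSet [true])) (z : AscHNN φ hinj),
      HNNExtension.of b * (HNNExtension.t ^ j * z)
        = HNNExtension.t ^ j * (HNNExtension.of ((⇑φ)^[j] b) * z) := by
    intro j b z
    rw [← mul_assoc, Kpow, mul_assoc]
  have K'' : ∀ (j : ℕ) (b : ↥(LMdef gSet [true])) (z : AscHNN φ hinj),
      (HNNExtension.t ^ j)⁻¹ * (HNNExtension.of b * z)
        = HNNExtension.of ((⇑φ)^[j] b) * ((HNNExtension.t ^ j)⁻¹ * z) := by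
    intro j b z
    rw [← mul_assoc, ← mul_assoc]
    congr 1
    calc (HNNExtension.t ^ j)⁻¹ * HNNExtension.of b
        = (HNNExtension.t ^ j)⁻¹ * (HNNExtension.of b * HNNExtension.t ^ j)
          * (HNNExtension.t ^ j)⁻¹ := by group
      _ = (HNNExtension.t ^ j)⁻¹ * (HNNExtension.t ^ j
            * HNNExtension.of ((⇑φ)^[j] b)) * (HNNExtension.t ^ j)⁻¹ := by rw [Kpow]
      _ = HNNExtension.of ((⇑φ)^[j] b) * (HNNExtension.t ^ j)⁻¹ := by group
  -- normal form
  have hform : ∀ w : AscHNN φ hinj, ∃ (n m : ℕ) (b : ↥(LMdef gSet [true])),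
      w = HNNExtension.t ^ n * HNNExtension.of b * (HNNExtension.t ^ m)⁻¹ := by
    intro w
    induction w using HNNExtension.induction_on with
    | of g => exact ⟨0, 0, g, by simp⟩
    | t => exact ⟨1, 0, 1, by simp⟩
    | inv x ih =>
      obtain ⟨n, m, b, rfl⟩ := ih
      exact ⟨m, n, b⁻¹, by simp [mul_inv_rev, mul_assoc]⟩
    | mul x y ihx ihy =>
      obtain ⟨n, m, b, rfl⟩ := ihx
      obtain ⟨n', m', b', rfl⟩ := ihy
      rcases le_or_gt m n' with h | h
      · refine ⟨n + (n' - m), m', (⇑φ)^[n' - m] b * b', ?_⟩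
        have h1 : (HNNExtension.t : AscHNN φ hinj) ^ n'
            = HNNExtension.t ^ m * HNNExtension.t ^ (n' - m) := by
          rw [← pow_add, Nat.add_sub_cancel' h]
        rw [h1]
        simp only [pow_add, map_mul, mul_assoc, inv_mul_cancel_left]
        rw [K']
      · refine ⟨n, m' + (m - n'), b * (⇑φ)^[m - n'] b', ?_⟩
        have h1 : (HNNExtension.t : AscHNN φ hinj) ^ m
            = HNNExtension.t ^ n' * HNNExtension.t ^ (m - n') := by
          rw [← pow_add, Nat.add_sub_cancel' h.le]
        rw [h1]
        simp only [pow_add, map_mul, mul_inv_rev, mul_assoc, inv_mul_cancel_left]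
        rw [K'']
  -- injectivity
  have hinj' : Function.Injective ψ := by
    rw [injective_iff_map_eq_one]
    intro w hw
    obtain ⟨n, m, b, rfl⟩ := hform w
    have hval : ψ (HNNExtension.t ^ n * HNNExtension.of b * (HNNExtension.t ^ m)⁻¹)
        = XG ^ n * incl b * (XG ^ m)⁻¹ := by
      simp only [map_mul, map_pow, map_inv, ψof, ψt]
    rw [hval] at hw
    have hM : px [] ^ n * (b : M) * (px [] ^ m)⁻¹ = 1 := by
      have := Subtype.ext_iff.1 hw
      simpa only [Subgroup.coe_mul, InvMemClass.coe_inv, SubmonoidClass.coe_pow,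
        hincl, Subgroup.coe_inclusion, OneMemClass.coe_one,
        show ((XG : ↥G) : M) = px [] from rfl] using this
    have h2 : px [] ^ n * (b : M) = px [] ^ m := by
      have := congrArg (fun z => z * px [] ^ m) hM
      simpa [mul_assoc] using this
    have hbM : (b : M) = (px [] ^ n)⁻¹ * px [] ^ m := by
      rw [← h2]; group
    rcases Nat.lt_trichotomy n m with h | h | h
    · exfalso
      obtain ⟨k, hk⟩ : ∃ k, m = n + (k + 1) := ⟨m - n - 1, by omega⟩
      have hb' : (b : M) = px [] ^ (k + 1) := by
        rw [hbM, hk, pow_add]; group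
      exact px_pow_not_mem_fixOutside k
        (hb' ▸ LMdef_le_fixOutside gSet [true] b.2)
    · subst h
      have hb1 : (b : M) = 1 := by rw [hbM]; group
      have hbone : b = 1 := Subtype.ext (by rw [hb1]; rfl)
      rw [hbone, map_one, mul_one]
      group
    · exfalso
      obtain ⟨k, hk⟩ : ∃ k, n = m + (k + 1) := ⟨n - m - 1, by omega⟩
      have hb' : (b : M) = ((px [])⁻¹) ^ (k + 1) := by
        rw [hbM, hk, pow_add, inv_pow]; group
      exact px_inv_pow_not_mem_fixOutside k
        (hb' ▸ LMdef_le_fixOutside gSet [true] b.2)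
  -- surjectivity
  have hsub : Subgroup.closure ((LMdef gSet [true] : Set M) ∪ {px []})
      ≤ Subgroup.map G.subtype ψ.range := by
    rw [Subgroup.closure_le]
    rintro g (hg | rfl)
    · exact ⟨incl ⟨g, hg⟩, ⟨HNNExtension.of ⟨g, hg⟩, ψof _⟩, rfl⟩
    · exact ⟨XG, ⟨HNNExtension.t, ψt⟩, rfl⟩
  have hsurj : Function.Surjective ψ := by
    intro g
    have hgmem : (g : M) ∈ Subgroup.map G.subtype ψ.range := by
      apply hsub
      rw [claim1]
      exact g.2
    obtain ⟨y, hy, hyg⟩ := hgmem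
    obtain ⟨w, rfl⟩ := hy
    exact ⟨w, Subtype.ext hyg⟩
  refine ⟨MulEquiv.ofBijective ψ ⟨hinj', hsurj⟩, fun b => ?_, ?_⟩
  · show ((ψ (HNNExtension.of b) : ↥G) : M) = (b : M)
    rw [ψof]
    rfl
  · show ((ψ HNNExtension.t : ↥G) : M) = px []
    rw [ψt]
/-- `G` is a strictly ascending HNN extension of the semi-deferred subgroup `G(1)` with
stable element `x_∅`: `G` is generated by `G(1)` together with `x_∅`;
`x_∅⁻¹ G(1) x_∅ ⊆ G(11)`, so `x_∅⁻¹ G(1) x_∅` is a proper subgroup of `G(1)`; and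
consequently `G ≅ G(1)*_{φ,t}` where `φ(g) = x_∅⁻¹ g x_∅`, via an isomorphism fixing
`G(1)` pointwise and sending the stable element `t` to `x_∅`. -/
theorem G_is_ascending_hnn_over_G1 :
    Subgroup.closure ((LMdef gSet [true] : Set M) ∪ {px []}) = G ∧
    conjSubgroup (px [])⁻¹ (LMdef gSet [true]) ≤ LMdef gSet [true, true] ∧
    conjSubgroup (px [])⁻¹ (LMdef gSet [true]) < LMdef gSet [true] ∧
    ∀ (φ : ↥(LMdef gSet [true]) →* ↥(LMdef gSet [true]))
      (_ : ∀ b : ↥(LMdef gSet [true]), (φ b : M) = (px [])⁻¹ * (b : M) * px [])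
      (hinj : Function.Injective φ),
      ∃ Φ : AscHNN φ hinj ≃* ↥G,
        (∀ b : ↥(LMdef gSet [true]), (Φ (HNNExtension.of b) : M) = (b : M)) ∧
        (Φ HNNExtension.t : M) = px [] := by
  exact ⟨claim1, claim2, claim3, claim4⟩

end LodhaMoore
end

section
/- The abelianization of G is generated by the images of x₀, x₁ and y₁₀; the abelianization of yG is generated by the images of y₀, x₁ and y₁₀; the abelianization of G_y is generated by the images of x₀, y₁ and y₁₀; and the abelianization of yGy is generated by the images of y₀, y₁ and y₁₀. -/
namespace LodhaMoore

lemma mem10_g : [true, false] ∈ gSet := ⟨by decide, by decide⟩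
lemma mem110_g : [true, true, false] ∈ gSet := ⟨by decide, by decide⟩
lemma mem10_gy : [true, false] ∈ gySet := show ¬ allFalse _ by decide
lemma mem10_yg : [true, false] ∈ ygSet := show ¬ allTrue _ by decide
lemma mem0_yg : [false] ∈ ygSet := show ¬ allTrue _ by decide
lemma mem1_gy : [true] ∈ gySet := show ¬ allFalse _ by decide
lemma mem_ygy (t : List Bool) : t ∈ ygySet := Set.mem_univ t


/-! ### Auxiliary machinery -/

section Aux

lemma append_cons_zero (b : Bool) (l : List Bool) (ξ : Seq) : append (b :: l) ξ 0 = b := by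
  simp [append]

lemma append_cons_succ (b : Bool) (l : List Bool) (ξ : Seq) (n : ℕ) :
    append (b :: l) ξ (n + 1) = append l ξ n := by
  by_cases h : n < l.length
  · simp [append, h, Nat.succ_lt_succ_iff]
  · simp [append, h, Nat.succ_lt_succ_iff, Nat.succ_sub_succ]

lemma append_nil_seq (ξ : Seq) : append [] ξ = ξ := by
  funext n; simp [append]

lemma append_append (s t : List Bool) (ξ : Seq) :
    append (s ++ t) ξ = append s (append t ξ) := by
  induction s with
  | nil => simp [append_nil_seq]
  | cons b l ih =>
    funext n
    cases n with
    | zero => simp [append_cons_zero]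
    | succ n => simp [append_cons_succ, ih]

lemma shift_one (b : Bool) (l : List Bool) (ζ : Seq) :
    (fun k => append (b :: l) ζ (k + 1)) = append l ζ :=
  funext fun k => append_cons_succ b l ζ k

lemma shift_two (a b : Bool) (l : List Bool) (ζ : Seq) :
    (fun k => append (a :: b :: l) ζ (k + 2)) = append l ζ :=
  funext fun k => by
    rw [show k + 2 = (k + 1) + 1 from rfl, append_cons_succ, append_cons_succ]

lemma seq_decomp1 (ξ : Seq) : ξ = append [ξ 0] (dropN 1 ξ) := by
  funext n
  cases n with
  | zero => simp [append_cons_zero]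
  | succ n => simp [append_cons_succ, append_nil_seq, dropN]

lemma seq_decomp2 (ξ : Seq) : ξ = append [ξ 0, ξ 1] (dropN 2 ξ) := by
  funext n
  rcases n with _ | _ | n
  · simp [append_cons_zero]
  · simp [append_cons_succ, append_cons_zero]
  · rw [show n + 1 + 1 = n + 2 from rfl, show ((append [ξ 0, ξ 1] (dropN 2 ξ)) (n+2) = dropN 2 ξ n) from by
      rw [show n + 2 = (n+1)+1 from rfl, append_cons_succ, append_cons_succ, append_nil_seq]]
    simp [dropN]

lemma seq_decomp3 (ξ : Seq) : ξ = append [ξ 0, ξ 1, ξ 2] (dropN 3 ξ) := by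
  funext n
  rcases n with _ | _ | _ | n
  · simp [append_cons_zero]
  · simp [append_cons_succ, append_cons_zero]
  · rw [show ((2:ℕ)) = (1+1 : ℕ) from rfl, append_cons_succ, append_cons_succ, append_cons_zero]
  · rw [show n + 1 + 1 + 1 = ((n+1)+1)+1 from rfl, append_cons_succ, append_cons_succ,
      append_cons_succ, append_nil_seq]
    exact congrArg ξ (by omega)

lemma dropN_one_append (b : Bool) (l : List Bool) (ζ : Seq) :
    dropN 1 (append (b :: l) ζ) = append l ζ :=
  funext fun n => append_cons_succ b l ζ n

lemma hp_cons (b : Bool) (l : List Bool) (ξ : Seq) :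
    hasPrefix (b :: l) ξ ↔ ξ 0 = b ∧ hasPrefix l (dropN 1 ξ) := by
  constructor
  · intro h
    refine ⟨h ⟨0, by simp⟩, fun i => ?_⟩
    have := h ⟨i.1 + 1, by simpa using Nat.succ_lt_succ i.2⟩
    simpa [dropN, Nat.add_comm] using this
  · rintro ⟨h0, h⟩ ⟨i, hi⟩
    cases i with
    | zero => simpa using h0
    | succ j =>
      have := h ⟨j, by simpa using Nat.lt_of_succ_lt_succ hi⟩
      simpa [dropN, Nat.add_comm] using this

lemma hp_append_iff (s t : List Bool) (ζ : Seq) :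
    hasPrefix (s ++ t) (append s ζ) ↔ hasPrefix t ζ := by
  induction s with
  | nil =>
    simp only [List.nil_append, append_nil_seq]
  | cons b l ih =>
    rw [List.cons_append, hp_cons, dropN_one_append, append_cons_zero]
    simp [ih]

lemma hp_mono (s t : List Bool) (ξ : Seq) (h : hasPrefix (s ++ t) ξ) : hasPrefix s ξ := by
  intro i
  have hi : (i : ℕ) < (s ++ t).length := by
    simp only [List.length_append]
    exact Nat.lt_of_lt_of_le i.2 (Nat.le_add_right _ _)
  have := h ⟨i, hi⟩
  rw [this]
  simp [List.getElem_append, i.2]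

end Aux


section LocalizeAlgebra

lemma localize_coe (s : List Bool) (f : Equiv.Perm Seq) :
    ⇑(localize s f) = fun ξ => if hasPrefix s ξ then append s (f (dropN s.length ξ)) else ξ :=
  rfl

lemma localize_eq (s : List Bool) (f : Equiv.Perm Seq) (ζ : Seq) :
    localize s f (append s ζ) = append s (f ζ) := by
  rw [localize_coe]
  simp [hasPrefix_append, dropN_append]

lemma localize_ne (s : List Bool) (f : Equiv.Perm Seq) (ξ : Seq) (h : ¬ hasPrefix s ξ) :
    localize s f ξ = ξ := by
  rw [localize_coe]; simp [h]

lemma localize_symm (s : List Bool) (f : Equiv.Perm Seq) :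
    (localize s f)⁻¹ = localize s f⁻¹ := rfl

lemma localize_mul (s : List Bool) (f g : Equiv.Perm Seq) :
    localize s (f * g) = localize s f * localize s g := by
  apply Equiv.ext
  intro ξ
  by_cases h : hasPrefix s ξ
  · rw [← append_dropN h, Equiv.Perm.mul_apply, localize_eq, localize_eq, localize_eq,
      Equiv.Perm.mul_apply]
  · rw [Equiv.Perm.mul_apply, localize_ne _ _ _ h, localize_ne _ _ _ h, localize_ne _ _ _ h]

lemma localize_localize (s t : List Bool) (f : Equiv.Perm Seq) :
    localize (s ++ t) f = localize s (localize t f) := by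
  apply Equiv.ext
  intro ξ
  by_cases h : hasPrefix s ξ
  · rw [← append_dropN h]
    set ζ := dropN s.length ξ with hζ
    by_cases h2 : hasPrefix t ζ
    · rw [← append_dropN h2]
      set η := dropN t.length ζ with hη
      conv_lhs => rw [← append_append, localize_eq]
      conv_rhs => rw [localize_eq, localize_eq]
      rw [append_append]
    · rw [localize_eq, localize_ne t f ζ h2,
        localize_ne (s ++ t) f _ (fun hc => h2 ((hp_append_iff s t ζ).1 hc))]
  · rw [localize_ne _ _ _ h, localize_ne (s++t) f ξ (fun hc => h (hp_mono s t ξ hc))]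

lemma conj_localize {g : Equiv.Perm Seq} {t t' : List Bool}
    (hg : ∀ η, g (append t η) = append t' η) (f : Equiv.Perm Seq) :
    g * localize t f * g⁻¹ = localize t' f := by
  apply Equiv.ext
  intro ξ
  by_cases h : hasPrefix t' ξ
  · have hξ : append t' (dropN t'.length ξ) = ξ := append_dropN h
    set η := dropN t'.length ξ with hη
    have hg' : g⁻¹ ξ = append t η := by
      rw [← hξ, ← hg η, Equiv.Perm.inv_def, Equiv.symm_apply_apply]
    calc (g * localize t f * g⁻¹) ξ = g (localize t f (g⁻¹ ξ)) := rfl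
      _ = g (append t (f η)) := by rw [hg', localize_eq]
      _ = append t' (f η) := hg _
      _ = localize t' f ξ := by rw [← hξ, localize_eq]
  · have h2 : ¬ hasPrefix t (g⁻¹ ξ) := by
      intro hc
      have e := congrArg g (append_dropN hc)
      rw [hg, Equiv.Perm.inv_def, Equiv.apply_symm_apply] at e
      exact h (e ▸ hasPrefix_append t' _)
    calc (g * localize t f * g⁻¹) ξ = g (localize t f (g⁻¹ ξ)) := rfl
      _ = g (g⁻¹ ξ) := by rw [localize_ne _ _ _ h2]
      _ = ξ := Equiv.apply_symm_apply g ξ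
      _ = localize t' f ξ := (localize_ne _ _ _ h).symm

end LocalizeAlgebra

section Cone

lemma ap0 (b : Bool) (l : List Bool) (ζ : Seq) : append (b :: l) ζ 0 = b :=
  append_cons_zero b l ζ

lemma ap1 (a b : Bool) (l : List Bool) (ζ : Seq) : append (a :: b :: l) ζ 1 = b := by
  rw [show (1:ℕ) = 0 + 1 from rfl, append_cons_succ, append_cons_zero]

lemma apS1 (b : Bool) (ζ : Seq) (n : ℕ) : append [b] ζ (n+1) = ζ n := by
  rw [append_cons_succ, append_nil_seq]

lemma apS2 (a b : Bool) (ζ : Seq) (n : ℕ) : append [a, b] ζ (n+2) = ζ n := by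
  rw [show n+2 = (n+1)+1 from rfl, append_cons_succ, apS1]

lemma apS3 (a b c : Bool) (ζ : Seq) (n : ℕ) : append [a, b, c] ζ (n+3) = ζ n := by
  rw [show n+3 = (n+2)+1 from rfl, append_cons_succ, apS2]

lemma append_two (a b : Bool) (l : List Bool) (ζ : Seq) (n : ℕ) :
    append (a :: b :: l) ζ (n+2) = append l ζ n := by
  rw [show n+2 = (n+1)+1 from rfl, append_cons_succ, append_cons_succ]

lemma append_three (a b c : Bool) (l : List Bool) (ζ : Seq) (n : ℕ) :
    append (a :: b :: c :: l) ζ (n+3) = append l ζ n := by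
  rw [show n+3 = (n+2)+1 from rfl, append_cons_succ, append_two]

lemma xcone00 (u : List Bool) (ζ : Seq) :
    xFun (append (false :: false :: u) ζ) = append (false :: u) ζ := by
  funext n
  have h0 := ap0 false (false :: u) ζ
  have h1 := ap1 false false u ζ
  rcases n with _ | n
  · simp [xFun, h0, h1, ap0]
  · simp [xFun, h0, h1, append_two, append_cons_succ]

lemma xcone01 (u : List Bool) (ζ : Seq) :
    xFun (append (false :: true :: u) ζ) = append (true :: false :: u) ζ := by
  funext n
  have h0 := ap0 false (true :: u) ζ
  have h1 := ap1 false true u ζ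
  rcases n with _ | _ | n
  · simp [xFun, h0, h1, ap0]
  · simp [xFun, h0, h1, ap1]
  · simp [xFun, h0, h1, append_two, append_cons_succ]

lemma xcone1 (u : List Bool) (ζ : Seq) :
    xFun (append (true :: u) ζ) = append (true :: true :: u) ζ := by
  funext n
  have h0 := ap0 true u ζ
  rcases n with _ | _ | n
  · simp [xFun, h0, ap0]
  · simp [xFun, h0, ap1]
  · simp [xFun, h0, append_two, append_cons_succ]

lemma yPerm_apply (ξ : Seq) (n : ℕ) : yPerm ξ n = yAux true n ξ := rfl

lemma yPerm_inv_apply (ξ : Seq) (n : ℕ) : yPerm⁻¹ ξ n = yAux false n ξ := rfl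

lemma yPerm_coe : ⇑yPerm = fun ξ n => yAux true n ξ := rfl

lemma yPerm_inv_coe : ⇑(yPerm⁻¹) = fun ξ n => yAux false n ξ := rfl

lemma ycone00 (ζ : Seq) : yPerm (append [false, false] ζ) = append [false] (yPerm ζ) := by
  funext n
  have h0 := ap0 false [false] ζ
  have h1 := ap1 false false [] ζ
  rcases n with _ | _ | n
  · simp [yPerm_coe, yAux, h0, h1, ap0]
  · simp [yPerm_coe, yAux, h0, h1, apS1, apS2]
  · simp [yPerm_coe, yAux, h0, h1, apS1, apS2]

lemma append_nil_apply (ζ : Seq) (k : ℕ) : append [] ζ k = ζ k := by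
  rw [append_nil_seq]

lemma ycone01 (ζ : Seq) : yPerm (append [false, true] ζ) = append [true, false] (yPerm⁻¹ ζ) := by
  funext n
  have h0 := ap0 false [true] ζ
  have h1 := ap1 false true [] ζ
  rcases n with _ | _ | n
  · simp [yPerm_coe, yAux, h0, h1, ap0]
  · simp [yPerm_coe, yAux, h0, h1, ap1]
  · simp [yPerm_coe, yPerm_inv_coe, yAux, h0, h1, apS2, append_two, append_nil_apply]; rfl

lemma ycone1 (ζ : Seq) : yPerm (append [true] ζ) = append [true, true] (yPerm ζ) := by
  funext n
  have h0 := ap0 true [] ζ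
  rcases n with _ | _ | n
  · simp [yPerm_coe, yAux, h0, ap0]
  · simp [yPerm_coe, yAux, h0, ap1]
  · simp [yPerm_coe, yAux, h0, apS1, apS2, append_two, append_nil_apply]

end Cone


section CoreRelations

lemma not_hp_of_first {b : Bool} (l : List Bool) {ξ : Seq} (h : ξ 0 ≠ b) :
    ¬ hasPrefix (b :: l) ξ := fun hc => h ((hp_cons b l ξ).1 hc).1

lemma not_hp_of_second {b c : Bool} (l : List Bool) {ξ : Seq} (h : ξ 1 ≠ c) :
    ¬ hasPrefix (b :: c :: l) ξ := fun hc =>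
  h (((hp_cons c l _).1 ((hp_cons b (c :: l) ξ).1 hc).2).1)

lemma xp00 (u : List Bool) (ζ : Seq) :
    xPerm (append (false :: false :: u) ζ) = append (false :: u) ζ := xcone00 u ζ

lemma xp01 (u : List Bool) (ζ : Seq) :
    xPerm (append (false :: true :: u) ζ) = append (true :: false :: u) ζ := xcone01 u ζ

lemma xp1 (u : List Bool) (ζ : Seq) :
    xPerm (append (true :: u) ζ) = append (true :: true :: u) ζ := xcone1 u ζ

lemma loc_pre1 (b : Bool) (u : List Bool) (f : Equiv.Perm Seq) (ζ : Seq) :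
    localize [b] f (append (b :: u) ζ) = append [b] (f (append u ζ)) := by
  rw [show append (b :: u) ζ = append [b] (append u ζ) from append_append [b] u ζ, localize_eq]

lemma loc_pre2 (a b : Bool) (u : List Bool) (f : Equiv.Perm Seq) (ζ : Seq) :
    localize [a, b] f (append (a :: b :: u) ζ) = append [a, b] (f (append u ζ)) := by
  rw [show append (a :: b :: u) ζ = append [a, b] (append u ζ) from append_append [a, b] u ζ,
    localize_eq]

lemma loc_t_f (l u : List Bool) (f : Equiv.Perm Seq) (ζ : Seq) :
    localize (true :: l) f (append (false :: u) ζ) = append (false :: u) ζ :=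
  localize_ne _ _ _ (not_hp_of_first _ (by rw [ap0]; decide))

lemma loc_f_t (l u : List Bool) (f : Equiv.Perm Seq) (ζ : Seq) :
    localize (false :: l) f (append (true :: u) ζ) = append (true :: u) ζ :=
  localize_ne _ _ _ (not_hp_of_first _ (by rw [ap0]; decide))

lemma loc_tf_tt (u : List Bool) (f : Equiv.Perm Seq) (ζ : Seq) :
    localize [true, false] f (append (true :: true :: u) ζ) = append (true :: true :: u) ζ :=
  localize_ne _ _ _ (not_hp_of_second _ (by rw [ap1]; decide))

lemma loc_tt_tf (u : List Bool) (f : Equiv.Perm Seq) (ζ : Seq) :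
    localize [true, true] f (append (true :: false :: u) ζ) = append (true :: false :: u) ζ :=
  localize_ne _ _ _ (not_hp_of_second _ (by rw [ap1]; decide))

lemma collapse1 (b : Bool) (l : List Bool) (ζ : Seq) :
    append [b] (append l ζ) = append (b :: l) ζ := (append_append [b] l ζ).symm

lemma collapse2 (a b : Bool) (l : List Bool) (ζ : Seq) :
    append [a, b] (append l ζ) = append (a :: b :: l) ζ := (append_append [a, b] l ζ).symm

/-- The core splitting relation `y = x ; y₀ ; y₁₀⁻¹ ; y₁₁` (rightmost acts last). -/
lemma coreY : yPerm = localize [true, true] yPerm * (localize [true, false] yPerm)⁻¹ *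
    localize [false] yPerm * xPerm := by
  apply Equiv.ext
  intro ξ
  simp only [Equiv.Perm.mul_apply, localize_symm]
  cases h0 : ξ 0 with
  | false =>
    cases h1 : ξ 1 with
    | false =>
      have hξ := seq_decomp2 ξ
      rw [h0, h1] at hξ
      rw [hξ]
      simp only [xp00, loc_pre1, loc_t_f, loc_f_t, ycone00, append_nil_seq, collapse1]
    | true =>
      have hξ := seq_decomp2 ξ
      rw [h0, h1] at hξ
      rw [hξ]
      simp only [xp01, loc_pre2, loc_t_f, loc_f_t, loc_tf_tt, loc_tt_tf, ycone01,
        append_nil_seq, collapse2]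
  | true =>
    have hξ := seq_decomp1 ξ
    rw [h0] at hξ
    rw [hξ]
    simp only [xp1, loc_pre2, loc_t_f, loc_f_t, loc_tf_tt, loc_tt_tf, ycone1,
      append_nil_seq, collapse2]

/-- The core Thompson relation `x₀ ; x ; x₁ = x ; x` (rightmost acts last). -/
lemma coreX : localize [true] xPerm * xPerm * localize [false] xPerm = xPerm * xPerm := by
  apply Equiv.ext
  intro ξ
  simp only [Equiv.Perm.mul_apply]
  cases h0 : ξ 0 with
  | false =>
    cases h1 : ξ 1 with
    | false =>
      cases h2 : ξ 2 with
      | false =>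
        have hξ := seq_decomp3 ξ
        rw [h0, h1, h2] at hξ
        rw [hξ]
        simp only [xp00, xp01, xp1, loc_pre1, loc_t_f, loc_f_t, collapse1]
      | true =>
        have hξ := seq_decomp3 ξ
        rw [h0, h1, h2] at hξ
        rw [hξ]
        simp only [xp00, xp01, xp1, loc_pre1, loc_t_f, loc_f_t, collapse1]
    | true =>
      have hξ := seq_decomp2 ξ
      rw [h0, h1] at hξ
      rw [hξ]
      simp only [xp00, xp01, xp1, loc_pre1, loc_t_f, loc_f_t, collapse1]
  | true =>
    have hξ := seq_decomp1 ξ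
    rw [h0] at hξ
    rw [hξ]
    simp only [xp00, xp01, xp1, loc_pre1, loc_t_f, loc_f_t, collapse1]

end CoreRelations

section MRelations

/-- A generator of `M` localized at `t`. -/
def gen (f : Equiv.Perm Seq) (t : List Bool) : M := MulOpposite.op (localize t f)

lemma px_gen (s : List Bool) : px s = gen xPerm s := rfl

lemma py_gen (s : List Bool) : py s = gen yPerm s := rfl

lemma rigid00 (p u : List Bool) (η : Seq) :
    localize p xPerm (append (p ++ false :: false :: u) η) = append (p ++ false :: u) η := by
  rw [append_append, localize_eq, append_append, xp00]

lemma rigid01 (p u : List Bool) (η : Seq) :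
    localize p xPerm (append (p ++ false :: true :: u) η) = append (p ++ true :: false :: u) η := by
  rw [append_append, localize_eq, append_append, xp01]

lemma rigid1 (p u : List Bool) (η : Seq) :
    localize p xPerm (append (p ++ true :: u) η) = append (p ++ true :: true :: u) η := by
  rw [append_append, localize_eq, append_append, xp1]

lemma gen_conj1 (f : Equiv.Perm Seq) (p u : List Bool) :
    gen f (p ++ false :: u) = (px p)⁻¹ * gen f (p ++ false :: false :: u) * px p := by
  have h := conj_localize (fun η => rigid00 p u η) f
  unfold gen px
  rw [← h]
  simp only [MulOpposite.op_mul, MulOpposite.op_inv, mul_assoc]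

lemma gen_conj2 (f : Equiv.Perm Seq) (p u : List Bool) :
    gen f (p ++ true :: false :: u) = (px p)⁻¹ * gen f (p ++ false :: true :: u) * px p := by
  have h := conj_localize (fun η => rigid01 p u η) f
  unfold gen px
  rw [← h]
  simp only [MulOpposite.op_mul, MulOpposite.op_inv, mul_assoc]

lemma gen_conj3 (f : Equiv.Perm Seq) (p u : List Bool) :
    gen f (p ++ true :: true :: u) = (px p)⁻¹ * gen f (p ++ true :: u) * px p := by
  have h := conj_localize (fun η => rigid1 p u η) f
  unfold gen px
  rw [← h]
  simp only [MulOpposite.op_mul, MulOpposite.op_inv, mul_assoc]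

/-- The splitting relation `y_s = x_s y_{s0} y_{s10}⁻¹ y_{s11}` in `M`. -/
lemma spl (s : List Bool) :
    py s = px s * py (s ++ [false]) * (py (s ++ [true, false]))⁻¹ * py (s ++ [true, true]) := by
  have h : localize s yPerm = localize (s ++ [true, true]) yPerm *
      (localize (s ++ [true, false]) yPerm)⁻¹ * localize (s ++ [false]) yPerm *
      localize s xPerm := by
    conv_lhs => rw [coreY]
    rw [localize_mul, localize_mul, localize_mul, localize_symm,
      ← localize_localize, ← localize_localize, ← localize_localize, ← localize_symm]
  unfold px py
  rw [h]
  simp only [MulOpposite.op_mul, MulOpposite.op_inv, mul_assoc]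

/-- The Thompson relation `x₀ x_∅ x₁ = x_∅ x_∅` in `M`. -/
lemma xrel : px [false] * px [] * px [true] = px [] * px [] := by
  unfold px
  rw [localize_nil]
  simp only [← MulOpposite.op_mul]
  exact congrArg MulOpposite.op (by rw [← mul_assoc]; exact coreX)

end MRelations


section KSection

variable (A : Set (List Bool)) (S : Set (Abelianization ↥(LM A)))

/-- The preimage in `M` of the subgroup generated by `S` in the abelianization of `LM A`. -/
def K : Subgroup M :=
  ((Subgroup.closure S).comap
    (Abelianization.of : ↥(LM A) →* Abelianization ↥(LM A))).map (LM A).subtype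

variable {A S}

lemma mem_K {m : M} (h : m ∈ LM A)
    (h2 : Abelianization.of (⟨m, h⟩ : ↥(LM A)) ∈ Subgroup.closure S) : m ∈ K A S :=
  Subgroup.mem_map.2 ⟨⟨m, h⟩, Subgroup.mem_comap.2 h2, rfl⟩

lemma K_conj {m g : M} (h : m ∈ K A S) (hg : g ∈ LM A) : g⁻¹ * m * g ∈ K A S := by
  rcases Subgroup.mem_map.1 h with ⟨x, hx, rfl⟩
  refine Subgroup.mem_map.2 ⟨⟨g, hg⟩⁻¹ * x * ⟨g, hg⟩, Subgroup.mem_comap.2 ?_, rfl⟩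
  have hx' : Abelianization.of x ∈ Subgroup.closure S := Subgroup.mem_comap.1 hx
  rw [map_mul, map_mul, map_inv,
    mul_comm ((Abelianization.of (⟨g, hg⟩ : ↥(LM A)))⁻¹) (Abelianization.of x),
    mul_assoc, inv_mul_cancel, mul_one]
  exact hx'

lemma K_conj_iff {m g : M} (hg : g ∈ LM A) : g⁻¹ * m * g ∈ K A S ↔ m ∈ K A S := by
  constructor
  · intro h
    have h2 := K_conj h (inv_mem hg)
    rwa [inv_inv, show g * (g⁻¹ * m * g) * g⁻¹ = m by group] at h2
  · intro h
    exact K_conj h hg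

lemma K_rw1 (f : Equiv.Perm Seq) (p u : List Bool) :
    gen f (p ++ false :: false :: u) ∈ K A S ↔ gen f (p ++ false :: u) ∈ K A S := by
  rw [gen_conj1 f p u]
  exact (K_conj_iff (px_mem A p)).symm

lemma K_rw2 (f : Equiv.Perm Seq) (p u : List Bool) :
    gen f (p ++ false :: true :: u) ∈ K A S ↔ gen f (p ++ true :: false :: u) ∈ K A S := by
  rw [gen_conj2 f p u]
  exact (K_conj_iff (px_mem A p)).symm

lemma K_rw3 (f : Equiv.Perm Seq) (p u : List Bool) :
    gen f (p ++ true :: u) ∈ K A S ↔ gen f (p ++ true :: true :: u) ∈ K A S := by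
  rw [gen_conj3 f p u]
  exact (K_conj_iff (px_mem A p)).symm

lemma red_ff (f : Equiv.Perm Seq) :
    ∀ u : List Bool, allFalse u → (gen f (false :: u) ∈ K A S ↔ gen f [false] ∈ K A S)
  | [], _ => Iff.rfl
  | b :: v, h => by
    have hb : b = false := h b (by simp)
    subst hb
    have h1 : gen f (false :: false :: v) ∈ K A S ↔ gen f (false :: v) ∈ K A S := K_rw1 f [] v
    exact h1.trans (red_ff f v fun c hc => h c (by simp [hc]))

lemma red_tt (f : Equiv.Perm Seq) :
    ∀ u : List Bool, allTrue u → (gen f (true :: u) ∈ K A S ↔ gen f [true] ∈ K A S)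
  | [], _ => Iff.rfl
  | b :: v, h => by
    have hb : b = true := h b (by simp)
    subst hb
    have h1 : gen f (true :: true :: v) ∈ K A S ↔ gen f (true :: v) ∈ K A S :=
      (K_rw3 f [] v).symm
    exact h1.trans (red_tt f v fun c hc => h c (by simp [hc]))

lemma red_tf (f : Equiv.Perm Seq) :
    ∀ u : List Bool, gen f (true :: false :: u) ∈ K A S ↔ gen f [true, false] ∈ K A S
  | [] => Iff.rfl
  | false :: v => (K_rw1 f [true] v).trans (red_tf f v)
  | true :: v =>
    ((K_rw2 f [true] v).trans ((K_rw3 f [] (false :: v)).symm)).trans (red_tf f v)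

lemma red_mixed (f : Equiv.Perm Seq) :
    ∀ (n : ℕ) (s : List Bool), s.length ≤ n → true ∈ s → false ∈ s →
      (gen f s ∈ K A S ↔ gen f [true, false] ∈ K A S) := by
  intro n
  induction n with
  | zero =>
    intro s hs ht _
    rw [List.length_eq_zero_iff.1 (Nat.le_zero.1 hs)] at ht
    simp at ht
  | succ n ih =>
    intro s hs ht hf
    rcases s with _ | ⟨b, v⟩
    · simp at ht
    cases b
    · have ht' : true ∈ v := by simpa using ht
      rcases v with _ | ⟨c, w⟩
      · simp at ht'
      cases c
      · have htw : true ∈ w := by simpa using ht'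
        refine (K_rw1 f [] w).trans (ih (false :: w) ?_ (by simp [htw]) (by simp))
        simpa using Nat.le_of_succ_le_succ hs
      · exact (K_rw2 f [] w).trans (red_tf f w)
    · have hf' : false ∈ v := by simpa using hf
      rcases v with _ | ⟨c, w⟩
      · simp at hf'
      cases c
      · exact red_tf f w
      · have hfw : false ∈ w := by simpa using hf'
        refine ((K_rw3 f [] w).symm).trans (ih (true :: w) ?_ (by simp) (by simp [hfw]))
        simpa using Nat.le_of_succ_le_succ hs

lemma spl_px (s : List Bool) (h1 : py s ∈ K A S) (h2 : py (s ++ [false]) ∈ K A S)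
    (h3 : py (s ++ [true, false]) ∈ K A S) (h4 : py (s ++ [true, true]) ∈ K A S) :
    px s ∈ K A S := by
  have e : px s = py s * (py (s ++ [true, true]))⁻¹ * py (s ++ [true, false]) *
      (py (s ++ [false]))⁻¹ := by
    rw [spl s]; group
  rw [e]
  exact mul_mem (mul_mem (mul_mem h1 (inv_mem h4)) h3) (inv_mem h2)

lemma ymix (hy10 : py [true, false] ∈ K A S) :
    ∀ t : List Bool, true ∈ t → false ∈ t → py t ∈ K A S := fun t ht hf =>
  (red_mixed yPerm t.length t le_rfl ht hf).mpr hy10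

lemma px_ff_of (hy0 : py [false] ∈ K A S) (hy10 : py [true, false] ∈ K A S) :
    px [false] ∈ K A S :=
  spl_px [false] hy0 ((red_ff yPerm [false] (by decide)).mpr hy0)
    (ymix hy10 [false, true, false] (by simp) (by simp))
    (ymix hy10 [false, true, true] (by simp) (by simp))

lemma px_tt_of (hy1 : py [true] ∈ K A S) (hy10 : py [true, false] ∈ K A S) :
    px [true] ∈ K A S :=
  spl_px [true] hy1 hy10
    (ymix hy10 [true, true, false] (by simp) (by simp))
    ((red_tt yPerm [true, true] (by decide)).mpr hy1)

theorem engine (hx0 : px [false] ∈ K A S) (hx1 : px [true] ∈ K A S)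
    (hy10 : py [true, false] ∈ K A S)
    (hF : ∀ t, t ∈ A → allFalse t → t ≠ [] → py [false] ∈ K A S)
    (hT : ∀ t, t ∈ A → allTrue t → t ≠ [] → py [true] ∈ K A S)
    (hE : [] ∈ A → py [false] ∈ K A S ∧ py [true] ∈ K A S) :
    Subgroup.closure S = ⊤ := by
  have hx10 : px [true, false] ∈ K A S :=
    spl_px [true, false] hy10 (ymix hy10 [true, false, false] (by simp) (by simp))
      (ymix hy10 [true, false, true, false] (by simp) (by simp))
      (ymix hy10 [true, false, true, true] (by simp) (by simp))
  have hxnil : px [] ∈ K A S := by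
    have e2 : (px [])⁻¹ * px [false] * px [] * px [true] = px [] := by
      calc (px [])⁻¹ * px [false] * px [] * px [true]
          = (px [])⁻¹ * (px [false] * px [] * px [true]) := by group
        _ = (px [])⁻¹ * (px [] * px []) := by rw [xrel]
        _ = px [] := by group
    rw [← e2]
    exact mul_mem (K_conj hx0 (px_mem A [])) hx1
  have xK : ∀ s : List Bool, px s ∈ K A S := by
    intro s
    rcases s with _ | ⟨b, u⟩
    · exact hxnil
    cases b
    · by_cases htt : true ∈ u
      · exact (red_mixed xPerm _ _ le_rfl (by simp [htt]) (by simp)).mpr hx10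
      · have hall : allFalse u := fun c hc => by
          cases c with
          | false => rfl
          | true => exact absurd hc htt
        exact (red_ff xPerm u hall).mpr hx0
    · by_cases hff : false ∈ u
      · exact (red_mixed xPerm _ _ le_rfl (by simp) (by simp [hff])).mpr hx10
      · have hall : allTrue u := fun c hc => by
          cases c with
          | true => rfl
          | false => exact absurd hc hff
        exact (red_tt xPerm u hall).mpr hx1
  have yK : ∀ t, t ∈ A → py t ∈ K A S := by
    intro t htA
    rcases t with _ | ⟨b, u⟩
    · rw [spl []]
      exact mul_mem (mul_mem (mul_mem hxnil (hE htA).1) (inv_mem hy10))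
        ((red_tt yPerm [true] (by decide)).mpr (hE htA).2)
    cases b
    · by_cases htt : true ∈ u
      · exact ymix hy10 _ (by simp [htt]) (by simp)
      · have hall : allFalse u := fun c hc => by
          cases c with
          | false => rfl
          | true => exact absurd hc htt
        have hallt : allFalse (false :: u) := fun c hc => by
          rcases List.mem_cons.1 hc with h | h
          · exact h
          · exact hall c h
        exact (red_ff yPerm u hall).mpr (hF _ htA hallt (by simp))
    · by_cases hff : false ∈ u
      · exact ymix hy10 _ (by simp) (by simp [hff])
      · have hall : allTrue u := fun c hc => by
          cases c with
          | true => rfl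
          | false => exact absurd hc hff
        have hallt : allTrue (true :: u) := fun c hc => by
          rcases List.mem_cons.1 hc with h | h
          · exact h
          · exact hall c h
        exact (red_tt yPerm u hall).mpr (hT _ htA hallt (by simp))
  have hle : LM A ≤ K A S := by
    refine (Subgroup.closure_le _).2 ?_
    rintro m (⟨s, rfl⟩ | ⟨s, hs, rfl⟩)
    · exact xK s
    · exact yK s hs
  refine (Subgroup.eq_top_iff' _).2 fun a => ?_
  refine QuotientGroup.induction_on a fun g => ?_
  rcases Subgroup.mem_map.1 (hle g.2) with ⟨x, hx, hxg⟩
  have hxg' : x = g := Subtype.ext hxg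
  exact hxg' ▸ (Subgroup.mem_comap.1 hx)

end KSection

/-- `G^{ab}` is generated by the images of `x₀, x₁, y₁₀`; `yG^{ab}` by those of
`y₀, x₁, y₁₀`; `G_y^{ab}` by those of `x₀, y₁, y₁₀`; `yGy^{ab}` by those of
`y₀, y₁, y₁₀`. -/
theorem abelianization_generators :
    Subgroup.closure
      {Abelianization.of (⟨px [false], px_mem gSet _⟩ : ↥G),
       Abelianization.of (⟨px [true], px_mem gSet _⟩ : ↥G),
       Abelianization.of (⟨py [true, false], py_mem mem10_g⟩ : ↥G)} = ⊤ ∧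
    Subgroup.closure
      {Abelianization.of (⟨py [false], py_mem mem0_yg⟩ : ↥yG),
       Abelianization.of (⟨px [true], px_mem ygSet _⟩ : ↥yG),
       Abelianization.of (⟨py [true, false], py_mem mem10_yg⟩ : ↥yG)} = ⊤ ∧
    Subgroup.closure
      {Abelianization.of (⟨px [false], px_mem gySet _⟩ : ↥Gy),
       Abelianization.of (⟨py [true], py_mem mem1_gy⟩ : ↥Gy),
       Abelianization.of (⟨py [true, false], py_mem mem10_gy⟩ : ↥Gy)} = ⊤ ∧
    Subgroup.closure
      {Abelianization.of (⟨py [false], py_mem (mem_ygy _)⟩ : ↥yGy),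
       Abelianization.of (⟨py [true], py_mem (mem_ygy _)⟩ : ↥yGy),
       Abelianization.of (⟨py [true, false], py_mem (mem_ygy _)⟩ : ↥yGy)} = ⊤ := by
  refine ⟨?_, ?_, ?_, ?_⟩
  · -- the group G
    refine engine ?_ ?_ ?_ ?_ ?_ ?_
    · exact mem_K (px_mem gSet [false]) (Subgroup.subset_closure (Set.mem_insert _ _))
    · exact mem_K (px_mem gSet [true])
        (Subgroup.subset_closure (Set.mem_insert_iff.2 (Or.inr (Set.mem_insert _ _))))
    · exact mem_K (py_mem mem10_g)
        (Subgroup.subset_closure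
          (Set.mem_insert_iff.2 (Or.inr (Set.mem_insert_iff.2 (Or.inr (Set.mem_singleton _))))))
    · exact fun t ht hall _ => absurd hall ht.1
    · exact fun t ht hall _ => absurd hall ht.2
    · exact fun h => absurd (by decide : allFalse []) h.1
  · -- the group yG
    refine engine ?_ ?_ ?_ ?_ ?_ ?_
    · exact px_ff_of
        (mem_K (py_mem mem0_yg) (Subgroup.subset_closure (Set.mem_insert _ _)))
        (mem_K (py_mem mem10_yg) (Subgroup.subset_closure
          (Set.mem_insert_iff.2 (Or.inr (Set.mem_insert_iff.2 (Or.inr (Set.mem_singleton _)))))))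
    · exact mem_K (px_mem ygSet [true])
        (Subgroup.subset_closure (Set.mem_insert_iff.2 (Or.inr (Set.mem_insert _ _))))
    · exact mem_K (py_mem mem10_yg)
        (Subgroup.subset_closure
          (Set.mem_insert_iff.2 (Or.inr (Set.mem_insert_iff.2 (Or.inr (Set.mem_singleton _))))))
    · exact fun t ht hall _ =>
        mem_K (py_mem mem0_yg) (Subgroup.subset_closure (Set.mem_insert _ _))
    · exact fun t ht hall _ => absurd hall ht
    · exact fun h => absurd (by decide : allTrue []) h
  · -- the group Gy
    refine engine ?_ ?_ ?_ ?_ ?_ ?_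
    · exact mem_K (px_mem gySet [false]) (Subgroup.subset_closure (Set.mem_insert _ _))
    · exact px_tt_of
        (mem_K (py_mem mem1_gy)
          (Subgroup.subset_closure (Set.mem_insert_iff.2 (Or.inr (Set.mem_insert _ _)))))
        (mem_K (py_mem mem10_gy) (Subgroup.subset_closure
          (Set.mem_insert_iff.2 (Or.inr (Set.mem_insert_iff.2 (Or.inr (Set.mem_singleton _)))))))
    · exact mem_K (py_mem mem10_gy)
        (Subgroup.subset_closure
          (Set.mem_insert_iff.2 (Or.inr (Set.mem_insert_iff.2 (Or.inr (Set.mem_singleton _))))))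
    · exact fun t ht hall _ => absurd hall ht
    · exact fun t ht hall _ =>
        mem_K (py_mem mem1_gy)
          (Subgroup.subset_closure (Set.mem_insert_iff.2 (Or.inr (Set.mem_insert _ _))))
    · exact fun h => absurd (by decide : allFalse []) h
  · -- the group yGy
    refine engine ?_ ?_ ?_ ?_ ?_ ?_
    · exact px_ff_of
        (mem_K (py_mem (mem_ygy [false])) (Subgroup.subset_closure (Set.mem_insert _ _)))
        (mem_K (py_mem (mem_ygy [true, false])) (Subgroup.subset_closure
          (Set.mem_insert_iff.2 (Or.inr (Set.mem_insert_iff.2 (Or.inr (Set.mem_singleton _)))))))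
    · exact px_tt_of
        (mem_K (py_mem (mem_ygy [true]))
          (Subgroup.subset_closure (Set.mem_insert_iff.2 (Or.inr (Set.mem_insert _ _)))))
        (mem_K (py_mem (mem_ygy [true, false])) (Subgroup.subset_closure
          (Set.mem_insert_iff.2 (Or.inr (Set.mem_insert_iff.2 (Or.inr (Set.mem_singleton _)))))))
    · exact mem_K (py_mem (mem_ygy [true, false]))
        (Subgroup.subset_closure
          (Set.mem_insert_iff.2 (Or.inr (Set.mem_insert_iff.2 (Or.inr (Set.mem_singleton _))))))
    · exact fun t ht hall _ =>
        mem_K (py_mem (mem_ygy [false])) (Subgroup.subset_closure (Set.mem_insert _ _))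
    · exact fun t ht hall _ =>
        mem_K (py_mem (mem_ygy [true]))
          (Subgroup.subset_closure (Set.mem_insert_iff.2 (Or.inr (Set.mem_insert _ _))))
    · exact fun h =>
        ⟨mem_K (py_mem (mem_ygy [false])) (Subgroup.subset_closure (Set.mem_insert _ _)),
         mem_K (py_mem (mem_ygy [true]))
           (Subgroup.subset_closure (Set.mem_insert_iff.2 (Or.inr (Set.mem_insert _ _))))⟩

end LodhaMoore
end
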